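/- Let C be a closed convex set in ℝⁿ, x ∉ C, y ∈ C, and λ ∈ [0,1]. Then ‖y - (P_C(x) + λ(P_C(x) - x))‖ ≤ ‖y - x‖, where P_C(x) is the metric projection of x onto C. Moreover, the inequality is strict if λ ∈ [0,1). -/
import Mathlib


open scoped RealInnerProductSpace
open Metric

/-- Fejér monotonicity principle: if `C` is a closed convex set, `x ∉ C`, `y ∈ C`,
`p` is the metric projection of `x` onto `C`, and `λ ∈ [0,1]`, then
`‖y - (p + λ(p - x))‖ ≤ ‖y - x‖`, with strict inequality when `λ < 1`. -/
theorem fejer_monotonicity {n : ℕ} (C : Set (EuclideanSpace ℝ (Fin n)))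
    (hCne : C.Nonempty) (hCc : IsClosed C) (hCconv : Convex ℝ C)
    (x y p : EuclideanSpace ℝ (Fin n)) (hx : x ∉ C) (hy : y ∈ C)
    (hp : p ∈ C) (hproj : dist x p = infDist x C) (lam : ℝ) (hlam : lam ∈ Set.Icc (0:ℝ) 1) :
    ‖y - (p + lam • (p - x))‖ ≤ ‖y - x‖ ∧
      (lam < 1 → ‖y - (p + lam • (p - x))‖ < ‖y - x‖) := by
  obtain ⟨hlam0, hlam1⟩ := hlam
  have hinf : ‖x - p‖ = ⨅ w : C, ‖x - w‖ := by
    rw [← dist_eq_norm, hproj, infDist_eq_iInf]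
    simp_rw [dist_eq_norm]
  have hyp : ⟪x - p, y - p⟫ ≤ 0 :=
    (norm_eq_iInf_iff_real_inner_le_zero hCconv hp).mp hinf y hy
  set a := y - p with ha
  set b := p - x with hb
  have hab : (0:ℝ) ≤ ⟪a, b⟫ := by
    have h1 : ⟪x - p, y - p⟫ = -⟪a, b⟫ := by
      rw [ha, hb, show x - p = -(p - x) by abel, inner_neg_left, real_inner_comm]
    linarith [hyp, h1.symm ▸ hyp]
  have hbne : b ≠ 0 := fun h => hx (by rw [hb, sub_eq_zero] at h; exact h ▸ hp)
  have hbpos : (0:ℝ) < ‖b‖ := norm_pos_iff.mpr hbne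
  have e1 : y - (p + lam • (p - x)) = a - lam • b := by rw [ha, hb]; abel
  have e2 : y - x = a + b := by rw [ha, hb]; abel
  have sq1 : ‖a - lam • b‖ ^ 2 = ‖a‖ ^ 2 - 2 * lam * ⟪a, b⟫ + lam ^ 2 * ‖b‖ ^ 2 := by
    rw [norm_sub_sq_real, real_inner_smul_right, norm_smul, Real.norm_eq_abs, mul_pow, sq_abs]
    ring
  have sq2 : ‖a + b‖ ^ 2 = ‖a‖ ^ 2 + 2 * ⟪a, b⟫ + ‖b‖ ^ 2 := norm_add_sq_real a b
  have key : ‖a + b‖ ^ 2 - ‖a - lam • b‖ ^ 2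
      = (1 - lam) * ((1 + lam) * ‖b‖ ^ 2) + 2 * ((1 + lam) * ⟪a, b⟫) := by
    rw [sq1, sq2]; ring
  rw [e1, e2]
  constructor
  · have hk : ‖a - lam • b‖ ^ 2 ≤ ‖a + b‖ ^ 2 := by
      nlinarith [key, mul_nonneg (sub_nonneg.mpr hlam1)
          (mul_nonneg (by linarith : (0:ℝ) ≤ 1 + lam) (sq_nonneg ‖b‖)),
        mul_nonneg (by linarith : (0:ℝ) ≤ 1 + lam) hab]
    exact (pow_le_pow_iff_left₀ (norm_nonneg _) (norm_nonneg _) two_ne_zero).mp hk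
  · intro hlt
    have hk : ‖a - lam • b‖ ^ 2 < ‖a + b‖ ^ 2 := by
      nlinarith [key, mul_pos (sub_pos.mpr hlt)
          (mul_pos (by linarith : (0:ℝ) < 1 + lam) (pow_pos hbpos 2)),
        mul_nonneg (by linarith : (0:ℝ) ≤ 1 + lam) hab]
    exact (pow_lt_pow_iff_left₀ (norm_nonneg _) (norm_nonneg _) two_ne_zero).mp hk
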